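/- Let f∈𝒦⁻ and write f² for the function n↦f(n)². Then for every n∈ℕ the series ∑_{k≥1} f(n+k)²/(f(n+k)²−f(n)²)² converges; consequently each basis vector ξ_n lies in D(f(N)T_{f²}) (i.e., T_{f²}ξ_n ∈ D(f(N))) and f(N)T_{f²,m}ξ_n → f(N)T_{f²}ξ_n in ℓ²(ℕ) as m→∞. -/

import Mathlib

open Filter Topology
open scoped ENNReal

noncomputable section

abbrev l2 : Type := lp (fun _ : ℕ => ℂ) 2

def xi (n : ℕ) : l2 := lp.single 2 n 1

def FinSupp (φ : l2) : Prop := (Function.support (⇑φ : ℕ → ℂ)).Finite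

/-- The class 𝒦. -/
def MemK (f : ℕ → ℝ) : Prop := 0 < f 0 ∧ ∀ n, f n < f (n + 1)

/-- The class 𝒦⁻. -/
def MemKminus (f : ℕ → ℝ) : Prop := MemK f ∧ Summable (fun n => 1 / (f n) ^ 2)

def fsq (f : ℕ → ℝ) : ℕ → ℝ := fun n => (f n) ^ 2

/-- the sequence of the multiplication operator `f(N)` applied to φ -/
def mulSeq (f : ℕ → ℝ) (φ : ℕ → ℂ) : ℕ → ℂ := fun n => ((f n : ℝ) : ℂ) * φ n

/-- the sequence of `f(N)^p` applied to φ -/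
def powSeq (f : ℕ → ℝ) (p : ℕ) (φ : ℕ → ℂ) : ℕ → ℂ := fun n => (((f n) ^ p : ℝ) : ℂ) * φ n

/-- coordinates of `T_{f,m} φ`. -/
def TfmSeq (f : ℕ → ℝ) (m : ℕ) (φ : ℕ → ℂ) : ℕ → ℂ := fun n =>
  Complex.I * ∑ k ∈ Finset.Icc 1 m,
    ((if k ≤ n then φ (n - k) / ((f n - f (n - k) : ℝ) : ℂ) else 0)
      - φ (n + k) / ((f (n + k) - f n : ℝ) : ℂ))

/-- `(φ, ψ)` is in the graph of `T_f`. -/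
def InGraphTf (f : ℕ → ℝ) (φ ψ : l2) : Prop :=
  ∃ h : ∀ m, Memℓp (TfmSeq f m (⇑φ)) 2,
    Tendsto (fun m => (⟨TfmSeq f m (⇑φ), h m⟩ : l2)) atTop (𝓝 ψ)

/-! ### Auxiliary material -/

/-- truncation of a sequence to the window `[n-m, n+m]`. -/
def trunc6 (n : ℕ) (c : ℕ → ℂ) (m : ℕ) : ℕ → ℂ := fun j =>
  if j ∈ Finset.Icc (n - m) (n + m) then c j else 0

lemma trunc6_eq_coe (n : ℕ) (c : ℕ → ℂ) (m : ℕ) :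
    trunc6 n c m = ⇑(∑ i ∈ Finset.Icc (n - m) (n + m), lp.single 2 i (c i)) := by
  funext j
  rw [lp.coeFn_sum, Finset.sum_apply]
  simp only [lp.single_apply, trunc6]
  simp [Pi.single_apply]

lemma trunc6_memℓp (n : ℕ) (c : ℕ → ℂ) (m : ℕ) : Memℓp (trunc6 n c m) 2 := by
  rw [trunc6_eq_coe]; exact lp.memℓp _

lemma trunc6_tendsto (n : ℕ) (c : ℕ → ℂ) (hc : Memℓp c 2)
    (h : ∀ m, Memℓp (trunc6 n c m) 2) :
    Tendsto (fun m => (⟨trunc6 n c m, h m⟩ : l2)) atTop (𝓝 (⟨c, hc⟩ : l2)) := by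
  have hmono : Tendsto (fun m : ℕ => Finset.Icc (n - m) (n + m)) atTop atTop := by
    apply tendsto_atTop_finset_of_monotone
    · intro a b hab
      apply Finset.Icc_subset_Icc <;> omega
    · intro i
      exact ⟨n + i, by simp [Finset.mem_Icc]; omega⟩
  have hs := (lp.hasSum_single (by norm_num : (2:ℝ≥0∞) ≠ ⊤) (⟨c, hc⟩ : l2)).comp hmono
  convert hs using 2 with m
  apply lp.ext
  show trunc6 n c m = ⇑(∑ i ∈ Finset.Icc (n - m) (n + m), lp.single 2 i (c i))
  exact trunc6_eq_coe n c m

lemma xi_apply (n j : ℕ) : (⇑(xi n) : ℕ → ℂ) j = if j = n then 1 else 0 := by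
  simp [xi, lp.single_apply, Pi.single_apply]

/-- the coordinates of the limit vector `T_{f'} ξ_n`. -/
def Tc6 (f' : ℕ → ℝ) (n : ℕ) : ℕ → ℂ := fun j =>
  if j = n then 0 else Complex.I / ((f' j - f' n : ℝ) : ℂ)

lemma Tfm_eval (f' : ℕ → ℝ) (n m : ℕ) :
    TfmSeq f' m (⇑(xi n)) = trunc6 n (Tc6 f' n) m := by
  funext j
  unfold TfmSeq trunc6 Tc6
  simp only [xi_apply, Finset.mem_Icc]
  rcases lt_trichotomy j n with hj | rfl | hj
  · -- j < n
    have : ∀ k ∈ Finset.Icc 1 m,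
        ((if k ≤ j then (if j - k = n then (1:ℂ) else 0) / ((f' j - f' (j - k) : ℝ) : ℂ) else 0)
          - (if j + k = n then (1:ℂ) else 0) / ((f' (j + k) - f' j : ℝ) : ℂ))
        = if k = n - j then Complex.I / ((f' j - f' n : ℝ) : ℂ) / Complex.I else 0 := by
      intro k hk
      simp only [Finset.mem_Icc] at hk
      by_cases h1 : k ≤ j
      · rw [if_pos h1, if_neg (by omega : ¬ j - k = n)]
        by_cases h2 : j + k = n
        · rw [if_pos h2, if_pos (by omega : k = n - j), h2]
          rw [div_div_cancel_left' (by simpa using Complex.I_ne_zero)]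
          have : ((f' j - f' n : ℝ) : ℂ) = -((f' n - f' j : ℝ) : ℂ) := by push_cast; ring
          rw [this]
          simp only [zero_div, zero_sub, one_div]
          rw [← inv_neg]
        · rw [if_neg h2, if_neg (by omega : ¬ k = n - j)]; simp
      · rw [if_neg h1]
        by_cases h2 : j + k = n
        · rw [if_pos h2, if_pos (by omega : k = n - j), h2]
          have : ((f' j - f' n : ℝ) : ℂ) = -((f' n - f' j : ℝ) : ℂ) := by push_cast; ring
          rw [this, div_div_cancel_left' (by simpa using Complex.I_ne_zero)]
          simp only [one_div, zero_sub]
          rw [← inv_neg]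
        · rw [if_neg h2, if_neg (by omega : ¬ k = n - j)]; simp
    rw [Finset.sum_congr rfl this, Finset.sum_ite_eq' (Finset.Icc 1 m) (n - j)]
    simp only [Finset.mem_Icc]
    by_cases h : 1 ≤ n - j ∧ n - j ≤ m
    · rw [if_pos h, if_pos (by omega), if_neg (by omega)]
      rw [mul_div_cancel₀ _ Complex.I_ne_zero]
    · rw [if_neg h, if_neg (by omega), mul_zero]
  · -- j = n
    rw [if_pos rfl, ite_self, Finset.sum_eq_zero, mul_zero]
    intro k hk
    simp only [Finset.mem_Icc] at hk
    rw [if_neg (by omega : ¬ j + k = j), zero_div, sub_zero]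
    by_cases h1 : k ≤ j
    · rw [if_pos h1, if_neg (by omega : ¬ j - k = j), zero_div]
    · rw [if_neg h1]
  · -- j > n
    have : ∀ k ∈ Finset.Icc 1 m,
        ((if k ≤ j then (if j - k = n then (1:ℂ) else 0) / ((f' j - f' (j - k) : ℝ) : ℂ) else 0)
          - (if j + k = n then (1:ℂ) else 0) / ((f' (j + k) - f' j : ℝ) : ℂ))
        = if k = j - n then Complex.I / ((f' j - f' n : ℝ) : ℂ) / Complex.I else 0 := by
      intro k hk
      simp only [Finset.mem_Icc] at hk
      rw [if_neg (by omega : ¬ j + k = n), zero_div, sub_zero]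
      by_cases h1 : k ≤ j
      · by_cases h2 : j - k = n
        · rw [if_pos h1, if_pos h2, if_pos (by omega : k = j - n), h2]
          rw [div_div_cancel_left' (by simpa using Complex.I_ne_zero), one_div]
        · rw [if_pos h1, if_neg h2, if_neg (by omega : ¬ k = j - n), zero_div]
      · rw [if_neg h1, if_neg (by omega : ¬ k = j - n)]
    rw [Finset.sum_congr rfl this, Finset.sum_ite_eq' (Finset.Icc 1 m) (j - n)]
    simp only [Finset.mem_Icc]
    by_cases h : 1 ≤ j - n ∧ j - n ≤ m
    · rw [if_pos h, if_pos (by omega), if_neg (by omega)]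
      rw [mul_div_cancel₀ _ Complex.I_ne_zero]
    · rw [if_neg h, if_neg (by omega), mul_zero]

lemma key_bound6 (f : ℕ → ℝ) (hf : MemK f) (n j : ℕ) (hj : n < j) :
    f j ^ 2 / (f j ^ 2 - f n ^ 2) ^ 2 ≤
      (f (n+1) ^ 2 / (f (n+1) ^ 2 - f n ^ 2)) ^ 2 * (1 / f j ^ 2) := by
  have hmono : StrictMono f := strictMono_nat_of_lt_succ hf.2
  have hpos : ∀ k, 0 < f k := fun k => lt_of_lt_of_le hf.1 (hmono.le_iff_le.2 (Nat.zero_le k))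
  have h1 : f n < f (n+1) := hf.2 n
  have h2 : f (n+1) ≤ f j := hmono.le_iff_le.2 hj
  have hn := hpos n
  have hn1 := hpos (n+1)
  have hjj := hpos j
  have hBn1 : f n ^ 2 < f (n+1) ^ 2 := by nlinarith
  have hA : f (n+1) ^ 2 ≤ f j ^ 2 := by nlinarith
  have hd1 : (0:ℝ) < (f j ^ 2 - f n ^ 2) ^ 2 := by nlinarith
  have hd2' : (0:ℝ) < f (n+1) ^ 2 - f n ^ 2 := by nlinarith
  have hd2 : (0:ℝ) < (f (n+1) ^ 2 - f n ^ 2) ^ 2 * f j ^ 2 := by positivity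
  have e : (f (n+1) ^ 2 / (f (n+1) ^ 2 - f n ^ 2)) ^ 2 * (1 / f j ^ 2)
      = (f (n+1)^2)^2 / ((f (n+1)^2 - f n^2)^2 * f j ^2) := by
    rw [div_pow, div_mul_div_comm, mul_one]
  rw [e, div_le_div_iff₀ hd1 hd2]
  have key : f j ^ 2 * (f (n+1)^2 - f n ^2) ≤ f (n+1)^2 * (f j ^2 - f n ^2) := by nlinarith
  have key2 : (f j ^ 2 * (f (n+1)^2 - f n ^2))^2 ≤ (f (n+1)^2 * (f j ^2 - f n ^2))^2 := by
    apply pow_le_pow_left₀ (by nlinarith) key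
  nlinarith [key2]

lemma part1sum (f : ℕ → ℝ) (hf : MemKminus f) (n : ℕ) :
    Summable (fun k : ℕ =>
      (f (n + (k + 1))) ^ 2 / ((f (n + (k + 1))) ^ 2 - (f n) ^ 2) ^ 2) := by
  have hmono : StrictMono f := strictMono_nat_of_lt_succ hf.1.2
  have hpos : ∀ k, 0 < f k := fun k => lt_of_lt_of_le hf.1.1 (hmono.le_iff_le.2 (Nat.zero_le k))
  have hsum : Summable (fun k : ℕ => 1 / f (n + (k + 1)) ^ 2) :=
    hf.2.comp_injective (fun a b hab => by omega)
  apply Summable.of_nonneg_of_le _ _ ((hsum.mul_left ((f (n+1) ^ 2 / (f (n+1) ^ 2 - f n ^ 2)) ^ 2)))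
  · intro k
    have h1 : f n < f (n + (k+1)) := hmono (by omega)
    have h2 : (0:ℝ) < f (n+(k+1)) ^ 2 - f n ^ 2 := by nlinarith [hpos n, hpos (n+(k+1))]
    positivity
  · intro k
    exact key_bound6 f hf.1 n (n + (k+1)) (by omega)

theorem stmt6 (f : ℕ → ℝ) (hf : MemKminus f) (n : ℕ) :
    Summable (fun k : ℕ =>
      (f (n + (k + 1))) ^ 2 / ((f (n + (k + 1))) ^ 2 - (f n) ^ 2) ^ 2) ∧
    ∃ T : l2, InGraphTf (fsq f) (xi n) T ∧
      ∃ hT : Memℓp (mulSeq f ⇑T) 2,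
        ∃ hm : ∀ m : ℕ, Memℓp (mulSeq f (TfmSeq (fsq f) m (⇑(xi n)))) 2,
          Filter.Tendsto (fun m : ℕ => (⟨mulSeq f (TfmSeq (fsq f) m (⇑(xi n))), hm m⟩ : l2))
            Filter.atTop (nhds (⟨mulSeq f ⇑T, hT⟩ : l2)) := by
  have hmono : StrictMono f := strictMono_nat_of_lt_succ hf.1.2
  have hpos : ∀ k, 0 < f k := fun k => lt_of_lt_of_le hf.1.1 (hmono.le_iff_le.2 (Nat.zero_le k))
  refine ⟨part1sum f hf n, ?_⟩
  set c : ℕ → ℂ := Tc6 (fsq f) n with hc_def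
  set g : ℕ → ℂ := mulSeq f c with hg_def
  -- norms of g
  have hgnorm : ∀ j, j ≠ n → ‖g j‖ ^ (2:ℝ) = f j ^ 2 / (f j ^ 2 - f n ^ 2) ^ 2 := by
    intro j hjn
    have : ‖g j‖ = |f j| / |f j ^ 2 - f n ^ 2| := by
      simp only [hg_def, hc_def, mulSeq, Tc6, fsq, if_neg hjn, norm_mul, norm_div,
        Complex.norm_real, Complex.norm_I, Real.norm_eq_abs]
      rw [mul_one_div]
    rw [this, Real.rpow_two, div_pow, sq_abs, sq_abs]
  -- summability of the norms of g
  have hgsum : Summable (fun j => ‖g j‖ ^ (2:ℝ)) := by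
    apply (summable_nat_add_iff (n+1)).1
    apply (part1sum f hf n).congr
    intro j
    rw [hgnorm (j + (n+1)) (by omega), show j + (n+1) = n + (j+1) from by omega]
  have hg2 : Memℓp g 2 := by
    apply memℓp_gen
    simpa only [ENNReal.toReal_ofNat] using hgsum
  -- summability of the norms of c
  have hcnorm : ∀ j, ‖c j‖ ^ (2:ℝ) ≤ (1 / f 0 ^ 2) * ‖g j‖ ^ (2:ℝ) := by
    intro j
    have hge : ‖g j‖ = |f j| * ‖c j‖ := by
      simp [hg_def, mulSeq, norm_mul, Complex.norm_real, Real.norm_eq_abs]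
    have h0j : f 0 ≤ f j := hmono.le_iff_le.2 (Nat.zero_le j)
    have h0 := hpos 0
    rw [Real.rpow_two, Real.rpow_two, one_div, inv_mul_eq_div, le_div_iff₀ (by positivity), hge]
    have habs : |f j| = f j := abs_of_pos (hpos j)
    rw [habs]
    have hsq : f 0 ^ 2 ≤ f j ^ 2 := by nlinarith
    calc ‖c j‖ ^ 2 * f 0 ^ 2 ≤ ‖c j‖ ^ 2 * f j ^ 2 := by
          exact mul_le_mul_of_nonneg_left hsq (sq_nonneg _)
      _ = (f j * ‖c j‖) ^ 2 := by ring
  have hc2 : Memℓp c 2 := by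
    apply memℓp_gen
    simp only [ENNReal.toReal_ofNat]
    exact Summable.of_nonneg_of_le (fun j => by positivity) hcnorm (hgsum.mul_left _)
  have mul_trunc : ∀ m, mulSeq f (trunc6 n c m) = trunc6 n g m := by
    intro m
    funext j
    show (↑(f j):ℂ) * (if j ∈ Finset.Icc (n - m) (n + m) then c j else 0)
      = (if j ∈ Finset.Icc (n - m) (n + m) then g j else 0)
    by_cases hj : j ∈ Finset.Icc (n - m) (n + m)
    · rw [if_pos hj, if_pos hj]; rfl
    · rw [if_neg hj, if_neg hj, mul_zero]
  -- the limit vector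
  refine ⟨⟨c, hc2⟩, ⟨fun m => by rw [Tfm_eval]; exact trunc6_memℓp _ _ _, ?_⟩, ?_, ?_, ?_⟩
  · exact (trunc6_tendsto n c hc2 (fun m => trunc6_memℓp n c m)).congr
      (fun m => lp.ext (by
        show trunc6 n c m = TfmSeq (fsq f) m (⇑(xi n))
        exact (Tfm_eval (fsq f) n m).symm))
  · show Memℓp (mulSeq f c) 2
    exact hg2
  · intro m
    rw [Tfm_eval]
    rw [mul_trunc]
    exact trunc6_memℓp _ _ _
  · have hmu : ∀ m, mulSeq f (TfmSeq (fsq f) m (⇑(xi n))) = trunc6 n g m := by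
      intro m
      rw [Tfm_eval, mul_trunc]
    exact (trunc6_tendsto n g hg2 (fun m => trunc6_memℓp n g m)).congr
      (fun m => lp.ext (by
        show trunc6 n g m = mulSeq f (TfmSeq (fsq f) m (⇑(xi n)))
        exact (hmu m).symm))
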